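/- Given a metric space $X$ with $\mathrm{asdim}(X)=\infty$ and $k\in\mathbb{N}$, the following are equivalent: (1) $\mathrm{trasdim}(X)\le\omega+k$; (2) for every $n\in\mathbb{N}$ there exists $m(n)\in\mathbb{N}$ such that for every $d>0$ there are uniformly bounded families $\mathcal{U}_{-k},\dots,\mathcal{U}_{m(n)}$ with $\mathcal{U}_i$ $n$-disjoint for $-k\le i\le 0$, $\mathcal{U}_j$ $d$-disjoint for $1\le j\le m(n)$, and $\bigcup_{i=-k}^{m(n)}\mathcal{U}_i$ covering $X$. -/

import Mathlib

noncomputable section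
open Metric Set
open scoped ENNReal

/-- A family of subsets is `R`-bounded if every member has diameter at most `R`. -/
def RBounded {X : Type*} [PseudoMetricSpace X] (R : ℝ) (U : Set (Set X)) : Prop :=
  ∀ A ∈ U, ∀ x ∈ A, ∀ y ∈ A, dist x y ≤ R

/-- A family of subsets is `r`-disjoint if distinct members are at distance at least `r`. -/
def RDisjoint {X : Type*} [PseudoMetricSpace X] (r : ℝ) (U : Set (Set X)) : Prop :=
  ∀ A ∈ U, ∀ B ∈ U, A ≠ B → ∀ x ∈ A, ∀ y ∈ B, r ≤ dist x y

/-- A family of subsets is uniformly bounded if it is `R`-bounded for some `R`. -/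
def UniformlyBounded {X : Type*} [PseudoMetricSpace X] (U : Set (Set X)) : Prop :=
  ∃ R : ℝ, RBounded R U

/-- `asdim X ≤ n`: for every `r > 0` there are `n+1` uniformly bounded, `r`-disjoint
families of subsets of `X` whose union covers `X`. -/
def AsdimLE (X : Type*) [PseudoMetricSpace X] (n : ℕ) : Prop :=
  ∀ r : ℝ, 0 < r → ∃ U : Fin (n + 1) → Set (Set X),
    (∀ i, UniformlyBounded (U i)) ∧ (∀ i, RDisjoint r (U i)) ∧
    (Set.univ : Set X) ⊆ ⋃ i, ⋃₀ U i

/-- `M^a` in Borst's notation. -/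
def Mder (M : Set (Finset ℕ)) (a : ℕ) : Set (Finset ℕ) :=
  {τ | insert a τ ∈ M ∧ a ∉ τ}

/-- `OrdLE α M` means `Ord M ≤ α` in Borst's sense: `Ord M = 0` iff `M = ∅`, and
`Ord M ≤ α` iff `Ord M^a < α` for every `a ∈ ℕ`. -/
def OrdLE (α : Ordinal) (M : Set (Finset ℕ)) : Prop :=
  M = ∅ ∨ ∀ a : ℕ, ∃ β : {β : Ordinal // β < α}, OrdLE β.1 (Mder M a)
termination_by α
decreasing_by exact β.2

/-- The collection `A(X,d)` of finite sets `σ ⊆ ℕ` for which there are no uniformly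
bounded families `U i` (`i ∈ σ`), each `i`-disjoint, whose union covers `X`. -/
def AColl (X : Type*) [PseudoMetricSpace X] : Set (Finset ℕ) :=
  {σ | σ.Nonempty ∧ ¬ ∃ U : ℕ → Set (Set X),
    (∀ i ∈ σ, UniformlyBounded (U i)) ∧ (∀ i ∈ σ, RDisjoint (i : ℝ) (U i)) ∧
    (Set.univ : Set X) ⊆ ⋃ i ∈ σ, ⋃₀ U i}

theorem RDisjoint_mono {X : Type*} [PseudoMetricSpace X] {r r' : ℝ} (h : r' ≤ r)
    {U : Set (Set X)} (hU : RDisjoint r U) : RDisjoint r' U :=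
  fun A hA B hB hAB x hx y hy => h.trans (hU A hA B hB hAB x hx y hy)

theorem OrdLE_iff (α : Ordinal) (M : Set (Finset ℕ)) :
    OrdLE α M ↔ M = ∅ ∨ ∀ a : ℕ, ∃ β, β < α ∧ OrdLE β (Mder M a) := by
  rw [OrdLE]
  constructor
  · rintro (h | h)
    · exact Or.inl h
    · exact Or.inr fun a => let ⟨β, hβ⟩ := h a; ⟨β.1, β.2, hβ⟩
  · rintro (h | h)
    · exact Or.inl h
    · exact Or.inr fun a => let ⟨β, hb, hβ⟩ := h a; ⟨⟨β, hb⟩, hβ⟩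

theorem OrdLE_mono {α α' : Ordinal} (h : α ≤ α') {M : Set (Finset ℕ)}
    (hM : OrdLE α M) : OrdLE α' M := by
  rw [OrdLE_iff] at hM ⊢
  exact hM.imp id fun hf a => let ⟨β, hb, hβ⟩ := hf a; ⟨β, lt_of_lt_of_le hb h, hβ⟩

theorem OrdLE_subset : ∀ (α : Ordinal) {M M' : Set (Finset ℕ)}, M ⊆ M' → OrdLE α M' → OrdLE α M := by
  intro α
  induction α using Ordinal.induction with
  | h α IH =>
    intro M M' hsub hM'
    rw [OrdLE_iff] at hM' ⊢
    rcases hM' with h | h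
    · exact Or.inl (Set.subset_eq_empty hsub h)
    · refine Or.inr fun a => ?_
      obtain ⟨β, hb, hβ⟩ := h a
      refine ⟨β, hb, IH β hb (fun τ hτ => ?_) hβ⟩
      exact ⟨hsub hτ.1, hτ.2⟩

theorem OrdLE_of_card : ∀ (p : ℕ) (M : Set (Finset ℕ)), (∀ σ ∈ M, σ.card ≤ p) →
    OrdLE ((p : Ordinal) + 1) M := by
  intro p
  induction p with
  | zero =>
    intro M hM
    rw [OrdLE_iff]
    refine Or.inr fun a => ⟨0, by norm_num, ?_⟩
    rw [OrdLE_iff]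
    refine Or.inl (Set.eq_empty_iff_forall_notMem.2 fun τ hτ => ?_)
    have := hM _ hτ.1
    simp [Finset.card_insert_of_notMem hτ.2] at this
  | succ p IH =>
    intro M hM
    rw [OrdLE_iff]
    refine Or.inr fun a => ⟨(p : Ordinal) + 1, ?_, IH _ fun τ hτ => ?_⟩
    · exact_mod_cast Nat.lt_succ_self (p+1)
    · have := hM _ hτ.1
      rw [Finset.card_insert_of_notMem hτ.2] at this
      omega

/-- The canonical collection of order `ω + k`. -/
def CColl (k : ℕ) (m : ℕ → ℕ) : Set (Finset ℕ) :=
  {σ | ∀ n, k + 1 ≤ (σ.filter fun i => i ≤ n).card → σ.card ≤ k + m n}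

theorem ordLE_CColl : ∀ (k : ℕ) (m : ℕ → ℕ),
    OrdLE (Ordinal.omega0 + (k : Ordinal)) (CColl k m) := by
  intro k
  induction k with
  | zero =>
    intro m
    rw [OrdLE_iff]
    refine Or.inr fun a => ⟨((m a + 1 : ℕ) : Ordinal), ?_, ?_⟩
    · simpa using Ordinal.nat_lt_omega0 (m a + 1)
    · have : ((m a : Ordinal) + 1) = ((m a + 1 : ℕ) : Ordinal) := by push_cast; ring
      rw [← this]
      apply OrdLE_of_card
      intro τ hτ
      have h1 : (insert a τ).card ≤ 0 + m a := by
        apply hτ.1 a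
        have : a ∈ (insert a τ).filter fun i => i ≤ a := by
          simp [Finset.mem_filter]
        calc 0 + 1 ≤ ({a} : Finset ℕ).card := by simp
        _ ≤ _ := Finset.card_le_card (by simpa using this)
      calc τ.card ≤ (insert a τ).card := Finset.card_le_card (Finset.subset_insert _ _)
      _ ≤ m a := by omega
  | succ k IH =>
    intro m
    rw [OrdLE_iff]
    refine Or.inr fun a => ⟨Ordinal.omega0 + (k : Ordinal), ?_, ?_⟩
    · have : ((k : Ordinal)) < ((k+1 : ℕ) : Ordinal) := by exact_mod_cast Nat.lt_succ_self k
      exact add_lt_add_right this _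
    · refine OrdLE_subset _ ?_ (IH fun n => max (m n) (m a))
      intro τ hτ
      obtain ⟨hσ, haτ⟩ := hτ
      intro n hn
      rcases le_or_gt a n with han | hna
      · have hfil : (insert a τ).filter (fun i => i ≤ n) = insert a (τ.filter fun i => i ≤ n) := by
          rw [Finset.filter_insert, if_pos han]
        have hcard : (k + 1) + 1 ≤ ((insert a τ).filter fun i => i ≤ n).card := by
          rw [hfil, Finset.card_insert_of_notMem (fun h => haτ (Finset.mem_filter.1 h).1)]
          omega
        have h2 := hσ n hcard
        have hτσ : τ.card + 1 = (insert a τ).card := (Finset.card_insert_of_notMem haτ).symm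
        have h3 : τ.card ≤ k + m n := by omega
        exact h3.trans (by simp [Nat.add_le_add_iff_left, le_max_left])
      · have hsub : (τ.filter fun i => i ≤ n) ⊆ τ.filter fun i => i ≤ a := by
          intro x hx
          rw [Finset.mem_filter] at hx ⊢
          exact ⟨hx.1, by omega⟩
        have hfil : (insert a τ).filter (fun i => i ≤ a) = insert a (τ.filter fun i => i ≤ a) := by
          rw [Finset.filter_insert, if_pos le_rfl]
        have hcard : (k + 1) + 1 ≤ ((insert a τ).filter fun i => i ≤ a).card := by
          rw [hfil, Finset.card_insert_of_notMem (fun h => haτ (Finset.mem_filter.1 h).1)]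
          have := Finset.card_le_card hsub
          omega
        have h2 := hσ a hcard
        have hτσ : τ.card + 1 = (insert a τ).card := (Finset.card_insert_of_notMem haτ).symm
        have h3 : τ.card ≤ k + m a := by omega
        exact h3.trans (by simp [Nat.add_le_add_iff_left, le_max_right])

theorem AColl_subset_CColl {X : Type*} [PseudoMetricSpace X] (k : ℕ) (m : ℕ → ℕ)
    (hm : ∀ n : ℕ, ∀ d : ℝ, 0 < d →
      ∃ (V : Fin (k + 1) → Set (Set X)) (W : Fin (m n) → Set (Set X)),
        (∀ i, UniformlyBounded (V i)) ∧ (∀ j, UniformlyBounded (W j)) ∧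
        (∀ i, RDisjoint (n : ℝ) (V i)) ∧ (∀ j, RDisjoint d (W j)) ∧
        (Set.univ : Set X) ⊆ (⋃ i, ⋃₀ V i) ∪ ⋃ j, ⋃₀ W j) :
    AColl X ⊆ CColl k m := by
  rintro σ ⟨hne, hnoU⟩ n hfil
  by_contra hc
  push_neg at hc
  set d : ℝ := (σ.max' hne : ℝ) + 1 with hd_def
  have hd : 0 < d := by positivity
  obtain ⟨V, W, hVb, hWb, hVd, hWd, hcov⟩ := hm n d hd
  obtain ⟨S, hSsub, hScard⟩ := Finset.exists_subset_card_eq hfil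
  have hSσ : S ⊆ σ := hSsub.trans (Finset.filter_subset _ _)
  have hR : m n ≤ (σ \ S).card := by
    rw [Finset.card_sdiff_of_subset hSσ, hScard]
    omega
  obtain ⟨T, hTsub, hTcard⟩ := Finset.exists_subset_card_eq hR
  have hTσ : T ⊆ σ := hTsub.trans (Finset.sdiff_subset)
  have hST : ∀ i, i ∈ S → i ∈ T → False := fun i hiS hiT =>
    (Finset.mem_sdiff.1 (hTsub hiT)).2 hiS
  let eS : {x // x ∈ S} ≃ Fin (k+1) := S.equivFinOfCardEq hScard
  let eT : {x // x ∈ T} ≃ Fin (m n) := T.equivFinOfCardEq hTcard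
  refine hnoU ⟨fun i =>
    {A | (∃ hi : i ∈ S, A ∈ V (eS ⟨i, hi⟩)) ∨ ∃ hi : i ∈ T, A ∈ W (eT ⟨i, hi⟩)}, ?_, ?_, ?_⟩
  · -- uniformly bounded
    intro i _
    choose rV hrV using hVb
    choose rW hrW using hWb
    have hFne : ((Finset.univ.image rV) ∪ (Finset.univ.image rW)).Nonempty :=
      ⟨rV 0, Finset.mem_union_left _ (Finset.mem_image_of_mem _ (Finset.mem_univ 0))⟩
    set R₀ := ((Finset.univ.image rV) ∪ (Finset.univ.image rW)).max' hFne with hR₀def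
    refine ⟨R₀, ?_⟩
    rintro A (⟨hi, hA⟩ | ⟨hi, hA⟩) x hx y hy
    · refine (hrV _ A hA x hx y hy).trans (Finset.le_max' _ _ ?_)
      exact Finset.mem_union_left _ (Finset.mem_image_of_mem _ (Finset.mem_univ _))
    · refine (hrW _ A hA x hx y hy).trans (Finset.le_max' _ _ ?_)
      exact Finset.mem_union_right _ (Finset.mem_image_of_mem _ (Finset.mem_univ _))
  · -- disjointness
    intro i hiσ
    rintro A (⟨hiS, hA⟩ | ⟨hiT, hA⟩) B (⟨hiS', hB⟩ | ⟨hiT', hB⟩) hAB x hx y hy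
    · have hin : (i : ℝ) ≤ n := by exact_mod_cast (Finset.mem_filter.1 (hSsub hiS)).2
      exact hin.trans (hVd _ A hA B hB hAB x hx y hy)
    · exact absurd hiT' (fun h => hST i hiS h)
    · exact absurd hiT (fun h => hST i hiS' h)
    · have hid : (i : ℝ) ≤ d := by
        have : i ≤ σ.max' hne := Finset.le_max' σ i hiσ
        have h2 : (i : ℝ) ≤ (σ.max' hne : ℝ) := by exact_mod_cast this
        rw [hd_def]
        linarith
      exact hid.trans (hWd _ A hA B hB hAB x hx y hy)
  · -- coverage
    intro x hx
    rcases hcov (Set.mem_univ x) with hx' | hx'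
    · simp only [Set.mem_iUnion, Set.mem_sUnion] at hx'
      obtain ⟨j, A, hAV, hxA⟩ := hx'
      refine Set.mem_iUnion.2 ⟨((eS.symm j) : ℕ), Set.mem_iUnion.2 ⟨hSσ (eS.symm j).2, ?_⟩⟩
      refine ⟨A, Or.inl ⟨(eS.symm j).2, ?_⟩, hxA⟩
      rw [Subtype.coe_eta, Equiv.apply_symm_apply]
      exact hAV
    · simp only [Set.mem_iUnion, Set.mem_sUnion] at hx'
      obtain ⟨j, A, hAW, hxA⟩ := hx'
      refine Set.mem_iUnion.2 ⟨((eT.symm j) : ℕ), Set.mem_iUnion.2 ⟨hTσ (eT.symm j).2, ?_⟩⟩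
      refine ⟨A, Or.inr ⟨(eT.symm j).2, ?_⟩, hxA⟩
      rw [Subtype.coe_eta, Equiv.apply_symm_apply]
      exact hAW

theorem FIN : ∀ (b : ℕ) (N : Set (Finset ℕ)),
    (∃ s : ℕ, ∀ B : Finset ℕ, B.card = b → (∀ i ∈ B, s ≤ i) → B ∈ N) →
    ¬ OrdLE (b : Ordinal) N := by
  intro b
  induction b with
  | zero =>
    rintro N ⟨s, hs⟩ hO
    have h0 : (∅ : Finset ℕ) ∈ N := hs ∅ rfl (by simp)
    rw [OrdLE_iff] at hO
    rcases hO with h | h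
    · rw [h] at h0; exact h0
    · obtain ⟨β, hβ, -⟩ := h 0
      exact absurd hβ (by simp)
  | succ b IH =>
    rintro N ⟨s, hs⟩ hO
    rw [OrdLE_iff] at hO
    rcases hO with h | h
    · have hmem : ((Finset.range (b+1)).map ⟨fun x => x + s, add_left_injective s⟩) ∈ N := by
        apply hs
        · simp
        · intro i hi
          simp only [Finset.mem_map, Finset.mem_range, Function.Embedding.coeFn_mk] at hi
          omega
      rw [h] at hmem; exact hmem
    · obtain ⟨β, hβ, hO'⟩ := h s
      have hcast : ((b+1 : ℕ) : Ordinal) = (b : Ordinal) + 1 := by push_cast; ring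
      rw [hcast, Ordinal.add_one_eq_succ, Order.lt_succ_iff] at hβ
      refine IH (Mder N s) ⟨s+1, ?_⟩ (OrdLE_mono hβ hO')
      intro B hB hBs
      have hsB : s ∉ B := fun h => by have := hBs s h; omega
      refine ⟨hs _ ?_ ?_, hsB⟩
      · rw [Finset.card_insert_of_notMem hsB, hB]
      · intro i hi
        rcases Finset.mem_insert.1 hi with rfl | hi
        · exact le_rfl
        · exact le_trans (by omega) (hBs i hi)

theorem LB : ∀ (β : Ordinal) (j t : ℕ) (N : Set (Finset ℕ)),
    (∀ (p : ℕ) (A : Finset ℕ), A.card = j → (∀ i ∈ A, t ≤ i) →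
      ∃ s : ℕ, ∀ B : Finset ℕ, B.card = p → (∀ i ∈ B, s ≤ i) → Disjoint A B → A ∪ B ∈ N) →
    β < Ordinal.omega0 + (j : Ordinal) → ¬ OrdLE β N := by
  intro β
  induction β using Ordinal.induction with
  | h β IH =>
    intro j t N hP hβ hO
    match j with
    | 0 =>
      rw [Nat.cast_zero, add_zero] at hβ
      obtain ⟨b, rfl⟩ := Ordinal.lt_omega0.1 hβ
      refine FIN b N ?_ hO
      obtain ⟨s, hs⟩ := hP b ∅ rfl (by simp)
      exact ⟨s, fun B h1 h2 => by simpa using hs B h1 h2 (Finset.disjoint_empty_left B)⟩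
    | (j+1) =>
      rw [OrdLE_iff] at hO
      rcases hO with h | h
      · -- N is nonempty, contradiction
        obtain ⟨s, hs⟩ := hP 0 ((Finset.range (j+1)).map ⟨fun x => x + t, add_left_injective t⟩)
          (by simp)
          (by intro i hi
              simp only [Finset.mem_map, Finset.mem_range, Function.Embedding.coeFn_mk] at hi
              omega)
        have hmem := hs ∅ rfl (by simp) (Finset.disjoint_empty_right _)
        rw [Finset.union_empty, h] at hmem
        exact hmem
      · obtain ⟨β', hβ', hO'⟩ := h t
        have hβ'' : β' < Ordinal.omega0 + (j : Ordinal) := by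
          by_contra hle
          push_neg at hle
          have hcast : Ordinal.omega0 + ((j+1 : ℕ) : Ordinal)
              = (Ordinal.omega0 + (j : Ordinal)) + 1 := by push_cast; rw [add_assoc]
          rw [hcast, Ordinal.add_one_eq_succ, Order.lt_succ_iff] at hβ
          exact absurd (lt_of_le_of_lt hle hβ') (not_lt.2 hβ)
        refine IH β' hβ' j (t+1) (Mder N t) ?_ hβ'' hO'
        intro p A' hA'card hA'mem
        have htA' : t ∉ A' := fun h => by have := hA'mem t h; omega
        obtain ⟨s, hs⟩ := hP p (insert t A')
          (by rw [Finset.card_insert_of_notMem htA', hA'card])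
          (by intro i hi
              rcases Finset.mem_insert.1 hi with rfl | hi
              · exact le_rfl
              · exact le_trans (by omega) (hA'mem i hi))
        refine ⟨max s (t+1), fun B hBcard hBmem hdisj => ?_⟩
        have htB : t ∉ B := fun h => by have := hBmem t h; omega
        have hABN : insert t A' ∪ B ∈ N := by
          apply hs B hBcard (fun i hi => le_trans (le_max_left _ _) (hBmem i hi))
          rw [Finset.disjoint_insert_left]
          exact ⟨htB, hdisj⟩
        constructor
        · rw [← Finset.insert_union]
          exact hABN
        · intro h
          rcases Finset.mem_union.1 h with h | h
          · exact htA' h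
          · exact htB h

/-- Proposition 2.5: characterization of `trasdim X ≤ ω + k` for a space of infinite
asymptotic dimension. -/
theorem trasdim_le_omega_add_iff {X : Type*} [PseudoMetricSpace X] (k : ℕ)
    (hX : ∀ n : ℕ, ¬ AsdimLE X n) :
    OrdLE (Ordinal.omega0 + (k : Ordinal)) (AColl X) ↔
      ∀ n : ℕ, ∃ m : ℕ, ∀ d : ℝ, 0 < d →
        ∃ (V : Fin (k + 1) → Set (Set X)) (W : Fin m → Set (Set X)),
          (∀ i, UniformlyBounded (V i)) ∧ (∀ j, UniformlyBounded (W j)) ∧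
          (∀ i, RDisjoint (n : ℝ) (V i)) ∧ (∀ j, RDisjoint d (W j)) ∧
          (Set.univ : Set X) ⊆ (⋃ i, ⋃₀ V i) ∪ ⋃ j, ⋃₀ W j := by
  constructor
  · intro hOrd n
    by_contra hno
    rw [not_exists] at hno
    refine LB (Ordinal.omega0 + (k : Ordinal)) (k+1) n (AColl X) ?_ ?_ hOrd
    · intro p A hAcard hAmem
      have h1 := hno p
      rw [not_forall] at h1
      obtain ⟨d, h2⟩ := h1
      rw [Classical.not_imp] at h2
      obtain ⟨hd, hnc⟩ := h2
      refine ⟨max n (Nat.ceil d), fun B hBcard hBmem hdisj => ?_⟩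
      have hABne : (A ∪ B).Nonempty := by
        obtain ⟨a, ha⟩ := Finset.card_pos.1 (show 0 < A.card by omega)
        exact ⟨a, Finset.mem_union_left _ ha⟩
      refine ⟨hABne, ?_⟩
      rintro ⟨U, hU1, hU2, hU3⟩
      apply hnc
      let eA : {x // x ∈ A} ≃ Fin (k+1) := A.equivFinOfCardEq hAcard
      let eB : {x // x ∈ B} ≃ Fin p := B.equivFinOfCardEq hBcard
      refine ⟨fun j => U ((eA.symm j) : ℕ), fun j => U ((eB.symm j) : ℕ), ?_, ?_, ?_, ?_, ?_⟩
      · exact fun j => hU1 _ (Finset.mem_union_left _ (eA.symm j).2)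
      · exact fun j => hU1 _ (Finset.mem_union_right _ (eB.symm j).2)
      · intro j
        refine RDisjoint_mono ?_ (hU2 _ (Finset.mem_union_left _ (eA.symm j).2))
        exact_mod_cast hAmem _ (eA.symm j).2
      · intro j
        refine RDisjoint_mono ?_ (hU2 _ (Finset.mem_union_right _ (eB.symm j).2))
        have h3 : Nat.ceil d ≤ ((eB.symm j) : ℕ) :=
          le_trans (le_max_right _ _) (hBmem _ (eB.symm j).2)
        calc d ≤ (Nat.ceil d : ℝ) := Nat.le_ceil d
        _ ≤ _ := by exact_mod_cast h3
      · intro x hx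
        have h3 := hU3 (Set.mem_univ x)
        simp only [Set.mem_iUnion] at h3
        obtain ⟨i, hi, hxU⟩ := h3
        rcases Finset.mem_union.1 hi with hiA | hiB
        · refine Set.mem_union_left _ (Set.mem_iUnion.2 ⟨eA ⟨i, hiA⟩, ?_⟩)
          show x ∈ ⋃₀ U ((eA.symm (eA ⟨i, hiA⟩)) : ℕ)
          rw [Equiv.symm_apply_apply]
          exact hxU
        · refine Set.mem_union_right _ (Set.mem_iUnion.2 ⟨eB ⟨i, hiB⟩, ?_⟩)
          show x ∈ ⋃₀ U ((eB.symm (eB ⟨i, hiB⟩)) : ℕ)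
          rw [Equiv.symm_apply_apply]
          exact hxU
    · have h4 : ((k : Ordinal)) < ((k+1 : ℕ) : Ordinal) := by exact_mod_cast Nat.lt_succ_self k
      exact add_lt_add_right h4 _
  · intro h
    choose m hm using h
    exact OrdLE_subset _ (AColl_subset_CColl k m hm) (ordLE_CColl k m)
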